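/- Let ℓ be a prime and G a finite ℓ-group, and let τ ∈ G with τ ≠ 1. Define φ_τ : N_G(τ) → (ℤ/o(τ)ℤ)ˣ by φ_τ(ρ) = α where ρτρ⁻¹ = τ^α. Then the image φ_τ(N_G(τ)) is the unique subgroup of order #(N_G(τ)/C_G(τ)) of the ℓ-Sylow subgroup of the cyclic group (ℤ/o(τ)ℤ)ˣ; explicitly, setting e_τ = o(τ)/#(N_G(τ)/C_G(τ)), one has ℓ ∣ e_τ and φ_τ(N_G(τ)) = {1 + e_τ k mod o(τ) : k ∈ ℤ}. -/

import Mathlib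

/-- The image of the map `φ_τ` (sending `ρ` with `ρτρ⁻¹ = τ^α` to the unit `α`)
restricted to a set `S` of elements normalizing `⟨τ⟩`. -/
def phiImage {G : Type*} [Group G] (τ : G) (S : Set G) : Set (ZMod (orderOf τ))ˣ :=
  {α | ∃ ρ ∈ S, ρ * τ * ρ⁻¹ = τ ^ ((α : ZMod (orderOf τ)).val)}

section Aux

open Subgroup

/-- lifting the exponent computation -/
lemma aux_emult {ℓ : ℕ} (hℓ : ℓ.Prime) (hodd : Odd ℓ) (j : ℕ) :
    emultiplicity (ℓ : ℤ) ((1 + ℓ : ℤ) ^ (ℓ ^ j) - 1) = (j + 1 : ℕ) := by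
  have h1 : (ℓ : ℤ) ∣ (1 + ℓ) - 1 := by simp
  have h2 : ¬(ℓ : ℤ) ∣ (1 + ℓ) := by
    intro h
    have : (ℓ : ℤ) ∣ 1 := (dvd_add_right (dvd_refl _)).mp (by rwa [add_comm] at h)
    exact hℓ.one_lt.ne' (by exact_mod_cast Int.eq_one_of_dvd_one (by positivity) this)
  have key := Int.emultiplicity_pow_sub_pow hℓ hodd h1 h2 (ℓ ^ j)
  rw [one_pow] at key
  have e1 : emultiplicity (ℓ : ℤ) ((1 + ℓ) - 1) = (1 : ℕ) := by
    simp only [add_sub_cancel_left]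
    have hpz : Prime (ℓ : ℤ) := Nat.prime_iff_prime_int.mp hℓ
    have := emultiplicity_pow_self (p := (ℓ : ℤ)) hpz.ne_zero hpz.not_unit 1
    rwa [pow_one] at this
  have e2 : emultiplicity ℓ (ℓ ^ j) = (j : ℕ) :=
    emultiplicity_pow_self hℓ.ne_zero hℓ.prime.not_unit j
  rw [key, e1, e2]
  norm_num [add_comm]

/-- order of 1+ℓ in (ZMod ℓ^v)ˣ -/
lemma aux_coprime {ℓ : ℕ} (hℓ : ℓ.Prime) (v : ℕ) : Nat.Coprime (1 + ℓ) (ℓ ^ v) := by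
  apply Nat.Coprime.pow_right
  rw [Nat.coprime_comm, hℓ.coprime_iff_not_dvd]
  intro h
  have h1 : ℓ ∣ 1 := (Nat.dvd_add_right (dvd_refl ℓ)).mp (by rwa [add_comm] at h)
  exact hℓ.one_lt.ne' (Nat.dvd_one.mp h1)

lemma aux_pow_eq_one_iff {ℓ v : ℕ} (hℓ : ℓ.Prime) [NeZero (ℓ ^ v)] (k : ℕ) :
    (ZMod.unitOfCoprime (1 + ℓ) (aux_coprime hℓ v)) ^ k = 1 ↔
      (ℓ : ℤ) ^ v ∣ (1 + ℓ : ℤ) ^ k - 1 := by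
  rw [Units.ext_iff, Units.val_pow_eq_pow_val, ZMod.coe_unitOfCoprime, Units.val_one]
  rw [show ((1 + ℓ : ℕ) : ZMod (ℓ ^ v)) = ((1 + ℓ : ℤ) : ZMod (ℓ ^ v)) by push_cast; ring]
  rw [← Int.cast_pow, show (1 : ZMod (ℓ ^ v)) = ((1 : ℤ) : ZMod (ℓ ^ v)) by simp,
    ← sub_eq_zero, ← Int.cast_sub, ZMod.intCast_zmod_eq_zero_iff_dvd]
  push_cast
  rfl

lemma aux_orderOf {ℓ : ℕ} (hℓ : ℓ.Prime) (hodd : Odd ℓ) {v : ℕ} (hv : 1 ≤ v)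
    [NeZero (ℓ ^ v)] :
    orderOf (ZMod.unitOfCoprime (1 + ℓ) (aux_coprime hℓ v)) = ℓ ^ (v - 1) := by
  obtain ⟨w, rfl⟩ : ∃ w, v = w + 1 := ⟨v - 1, by omega⟩
  simp only [Nat.add_sub_cancel]
  have hdvd : orderOf (ZMod.unitOfCoprime (1 + ℓ) (aux_coprime hℓ (w + 1))) ∣ ℓ ^ w := by
    apply orderOf_dvd_of_pow_eq_one
    rw [aux_pow_eq_one_iff hℓ]
    apply pow_dvd_of_le_emultiplicity (k := w + 1)
    rw [aux_emult hℓ hodd w]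
  obtain ⟨t, ht, hord⟩ := (Nat.dvd_prime_pow hℓ).mp hdvd
  rcases eq_or_lt_of_le ht with h | h
  · rw [hord, h]
  · exfalso
    obtain ⟨s, rfl⟩ : ∃ s, w = s + 1 := ⟨w - 1, by omega⟩
    have h1 : (ZMod.unitOfCoprime (1 + ℓ) (aux_coprime hℓ (s + 1 + 1))) ^ (ℓ ^ s) = 1 := by
      apply orderOf_dvd_iff_pow_eq_one.mp
      rw [hord]
      exact pow_dvd_pow ℓ (by omega)
    rw [aux_pow_eq_one_iff hℓ] at h1
    revert h1
    apply not_pow_dvd_of_emultiplicity_lt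
    rw [aux_emult hℓ hodd s]
    norm_cast
    omega

lemma aux_card_ker {n e : ℕ} [NeZero n] [NeZero e] (h : e ∣ n) :
    Nat.card (ZMod.unitsMap h).ker * e.totient = n.totient := by
  have h1 : (ZMod.unitsMap h).ker.index = e.totient := by
    rw [Subgroup.index_ker, MonoidHom.range_eq_top_of_surjective _ (ZMod.unitsMap_surjective h)]
    rw [Subgroup.card_top, Nat.card_eq_fintype_card, ZMod.card_units_eq_totient]
  rw [← h1, Subgroup.card_mul_index, Nat.card_eq_fintype_card, ZMod.card_units_eq_totient]

lemma aux_ker_mem {n e : ℕ} [NeZero n] [NeZero e] (h : e ∣ n) (α : (ZMod n)ˣ) :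
    α ∈ (ZMod.unitsMap h).ker ↔ ∃ k : ZMod n, (α : ZMod n) = 1 + (e : ZMod n) * k := by
  rw [MonoidHom.mem_ker, ZMod.unitsMap_def, Units.ext_iff, Units.coe_map, Units.val_one]
  simp only [RingHom.toMonoidHom_eq_coe, MonoidHom.coe_coe]
  have key : ∀ y : ZMod n, (ZMod.castHom h (ZMod e)) y = 0 ↔ ∃ k : ZMod n, y = e * k := by
    intro y
    constructor
    · intro hy
      have : ((y.val : ℕ) : ZMod e) = 0 := by
        rw [ZMod.natCast_val, ← ZMod.castHom_apply (h := h) y]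
        exact hy
      obtain ⟨b, hb⟩ := (ZMod.natCast_eq_zero_iff _ _).mp this
      refine ⟨(b : ZMod n), ?_⟩
      have hyv : ((y.val : ℕ) : ZMod n) = y := by rw [ZMod.natCast_val, ZMod.cast_id]
      rw [← hyv, hb]
      push_cast
      ring
    · rintro ⟨k, rfl⟩
      rw [map_mul, map_natCast, ZMod.natCast_self, zero_mul]
  constructor
  · intro hy
    have h0 : (ZMod.castHom h (ZMod e)) ((α : ZMod n) - 1) = 0 := by
      rw [map_sub, map_one, hy, sub_self]
    obtain ⟨k, hk⟩ := (key _).mp h0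
    exact ⟨k, by linear_combination (norm := ring_nf) hk⟩
  · rintro ⟨k, hk⟩
    have : (α : ZMod n) - 1 = e * k := by rw [hk]; ring
    have h0 := (key _).mpr ⟨k, this⟩
    rw [map_sub, map_one, sub_eq_zero] at h0
    exact h0

lemma aux_cyclic_unique {Z : Type*} [Group Z] [Finite Z] [IsCyclic Z] (A B : Subgroup Z)
    (h : Nat.card A = Nat.card B) : A = B := by
  classical
  cases nonempty_fintype Z
  set m := Nat.card A with hm
  have hm0 : 0 < m := Nat.card_pos
  have key : ∀ C : Subgroup Z, Nat.card C = m →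
      (C : Set Z).toFinset = Finset.univ.filter (fun a => a ^ m = 1) := by
    intro C hC
    symm
    apply (Finset.eq_of_subset_of_card_le _ _).symm
    · intro x hx
      simp only [Set.mem_toFinset, SetLike.mem_coe] at hx
      simp only [Finset.mem_filter, Finset.mem_univ, true_and]
      have : (⟨x, hx⟩ : C) ^ m = 1 := by rw [← hC]; exact pow_card_eq_one'
      simpa using congrArg (Subtype.val) this
    · calc (Finset.univ.filter (fun a => a ^ m = 1)).card ≤ m :=
            IsCyclic.card_pow_eq_one_le hm0
        _ = (C : Set Z).toFinset.card := by
            rw [Set.toFinset_card, ← hC, Nat.card_eq_fintype_card]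
            congr 1
  have hA := key A rfl
  have hB := key B (by rw [← h])
  apply SetLike.ext'
  rw [← Set.coe_toFinset (A : Set Z), ← Set.coe_toFinset (B : Set Z), hA, hB]

lemma aux_coprime' {ℓ n v : ℕ} (hℓ : ℓ.Prime) (hn : n = ℓ ^ v) : Nat.Coprime (1 + ℓ) n :=
  hn ▸ aux_coprime hℓ v

lemma aux_orderOf' {ℓ n v : ℕ} (hℓ : ℓ.Prime) (hodd : Odd ℓ) (hv : 1 ≤ v) (hn : n = ℓ ^ v)
    [NeZero n] :
    orderOf (ZMod.unitOfCoprime (1 + ℓ) (aux_coprime' hℓ hn)) = ℓ ^ (v - 1) := by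
  subst hn
  exact aux_orderOf hℓ hodd hv

lemma aux_mem' {ℓ n v : ℕ} (hℓ : ℓ.Prime) (hn : n = ℓ ^ v) [NeZero n] (hd : ℓ ∣ n) :
    ZMod.unitsMap hd (ZMod.unitOfCoprime (1 + ℓ) (aux_coprime' hℓ hn)) = 1 := by
  apply Units.ext
  rw [ZMod.unitsMap_def, Units.coe_map, Units.val_one]
  simp only [RingHom.toMonoidHom_eq_coe, MonoidHom.coe_coe, ZMod.coe_unitOfCoprime]
  rw [map_natCast]
  push_cast [ZMod.natCast_self]
  ring

section Phi

variable {G : Type*} [Group G]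

/-- For `ρ` normalizing `⟨τ⟩`, the exponent `α` with `ρτρ⁻¹ = τ^α`, as an element
of `ZMod (orderOf τ)`. -/
noncomputable def auxPhiFun (τ ρ : G) : ZMod (orderOf τ) :=
  if h : ρ * τ * ρ⁻¹ ∈ Subgroup.zpowers τ then
    ((Subgroup.mem_zpowers_iff.mp h).choose : ZMod (orderOf τ)) else 0

lemma aux_zpow_cast (τ : G) [NeZero (orderOf τ)] (a : ℤ) :
    τ ^ a = τ ^ ((a : ZMod (orderOf τ))).val := by
  conv_lhs => rw [← zpow_mod_orderOf]
  rw [← ZMod.val_intCast (n := orderOf τ) a, zpow_natCast]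

lemma auxPhiFun_spec (τ ρ : G) [NeZero (orderOf τ)] (h : ρ * τ * ρ⁻¹ ∈ Subgroup.zpowers τ) :
    ρ * τ * ρ⁻¹ = τ ^ (auxPhiFun τ ρ).val := by
  rw [auxPhiFun, dif_pos h, ← aux_zpow_cast]
  exact (Subgroup.mem_zpowers_iff.mp h).choose_spec.symm

lemma auxPhiFun_uniq (τ ρ : G) [NeZero (orderOf τ)] (h : ρ * τ * ρ⁻¹ ∈ Subgroup.zpowers τ)
    (x : ZMod (orderOf τ)) (hx : ρ * τ * ρ⁻¹ = τ ^ x.val) : auxPhiFun τ ρ = x := by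
  have h1 := auxPhiFun_spec τ ρ h
  rw [h1] at hx
  have h2 : (auxPhiFun τ ρ).val ≡ x.val [MOD orderOf τ] := pow_eq_pow_iff_modEq.mp hx
  have h3 : (auxPhiFun τ ρ).val = x.val := by
    have l1 := ZMod.val_lt (auxPhiFun τ ρ)
    have l2 := ZMod.val_lt x
    unfold Nat.ModEq at h2
    rwa [Nat.mod_eq_of_lt l1, Nat.mod_eq_of_lt l2] at h2
  exact ZMod.val_injective _ h3

lemma auxPhiFun_mul (τ : G) [NeZero (orderOf τ)] {ρ σ : G}
    (hρ : ρ ∈ Subgroup.normalizer (Subgroup.zpowers τ : Set G)) (hσ : σ ∈ Subgroup.normalizer (Subgroup.zpowers τ : Set G)) :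
    auxPhiFun τ (ρ * σ) = auxPhiFun τ ρ * auxPhiFun τ σ := by
  have hmem : ∀ {g : G}, g ∈ Subgroup.normalizer (Subgroup.zpowers τ : Set G) →
      g * τ * g⁻¹ ∈ Subgroup.zpowers τ := fun hg =>
    (Subgroup.mem_normalizer_iff.mp hg τ).mp (Subgroup.mem_zpowers τ)
  apply auxPhiFun_uniq _ _ (hmem (mul_mem hρ hσ))
  have h1 := auxPhiFun_spec τ ρ (hmem hρ)
  have h2 := auxPhiFun_spec τ σ (hmem hσ)
  calc ρ * σ * τ * (ρ * σ)⁻¹ = ρ * (σ * τ * σ⁻¹) * ρ⁻¹ := by group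
    _ = ρ * τ ^ (auxPhiFun τ σ).val * ρ⁻¹ := by rw [← h2]
    _ = (ρ * τ * ρ⁻¹) ^ (auxPhiFun τ σ).val := by rw [conj_pow]
    _ = (τ ^ (auxPhiFun τ ρ).val) ^ (auxPhiFun τ σ).val := by rw [← h1]
    _ = τ ^ ((auxPhiFun τ ρ).val * (auxPhiFun τ σ).val) := by rw [← pow_mul]
    _ = τ ^ ((auxPhiFun τ ρ * auxPhiFun τ σ).val) := by
        rw [ZMod.val_mul, pow_mod_orderOf]

lemma auxPhiFun_one (τ : G) (h1 : 1 < orderOf τ) : auxPhiFun τ 1 = 1 := by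
  haveI : NeZero (orderOf τ) := ⟨by omega⟩
  haveI : Fact (1 < orderOf τ) := ⟨h1⟩
  apply auxPhiFun_uniq τ 1 (by simp)
  rw [ZMod.val_one, pow_one]
  group

end Phi

end Aux

theorem stmt11 {G : Type*} [Group G] [Finite G] (ℓ : ℕ) (hℓ : ℓ.Prime) (hodd : Odd ℓ)
    (hG : IsPGroup ℓ G) (τ : G) (hτ : τ ≠ 1) :
    ℓ ∣ orderOf τ / ((Subgroup.centralizer {τ}).relIndex (Subgroup.normalizer (Subgroup.zpowers τ : Set G))) ∧
    phiImage τ ((Subgroup.normalizer (Subgroup.zpowers τ : Set G)) : Set G) =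
      {α : (ZMod (orderOf τ))ˣ | ∃ k : ZMod (orderOf τ),
        (α : ZMod (orderOf τ)) = 1 +
          (orderOf τ / ((Subgroup.centralizer {τ}).relIndex
            (Subgroup.normalizer (Subgroup.zpowers τ : Set G))) : ℕ) * k} := by
  classical
  haveI hne : NeZero (orderOf τ) := ⟨(orderOf_pos τ).ne'⟩
  obtain ⟨k0, hk0⟩ := hG τ
  obtain ⟨v, hvle, hv⟩ := (Nat.dvd_prime_pow hℓ).mp (orderOf_dvd_of_pow_eq_one hk0)
  clear hvle hk0
  have hv1 : 1 ≤ v := by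
    rcases Nat.eq_zero_or_pos v with h | h
    · exact absurd (orderOf_eq_one_iff.mp (by rw [hv, h, pow_zero])) hτ
    · exact h
  have h2n : 1 < orderOf τ := by
    rw [hv]; exact Nat.one_lt_pow (by omega) hℓ.one_lt
  set N := Subgroup.normalizer (Subgroup.zpowers τ : Set G) with hN
  have hmem : ∀ {g : G}, g ∈ N → g * τ * g⁻¹ ∈ Subgroup.zpowers τ := fun {g} hg =>
    (Subgroup.mem_normalizer_iff.mp hg τ).mp (Subgroup.mem_zpowers τ)
  let F : N →* ZMod (orderOf τ) :=
    { toFun := fun ρ => auxPhiFun τ ↑ρ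
      map_one' := auxPhiFun_one τ h2n
      map_mul' := fun a b => auxPhiFun_mul τ a.2 b.2 }
  let φ : ↥N →* (ZMod (orderOf τ))ˣ := F.toHomUnits
  have hφcoe : ∀ ρ : N, (φ ρ : ZMod (orderOf τ)) = auxPhiFun τ ↑ρ := fun ρ => rfl
  have hrange : (φ.range : Set (ZMod (orderOf τ))ˣ) = phiImage τ (N : Set G) := by
    ext α
    simp only [SetLike.mem_coe, MonoidHom.mem_range, phiImage, Set.mem_setOf_eq]
    constructor
    · rintro ⟨ρ, rfl⟩
      exact ⟨ρ, ρ.2, by rw [hφcoe]; exact auxPhiFun_spec τ ρ (hmem ρ.2)⟩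
    · rintro ⟨ρ, hρ, hα⟩
      refine ⟨⟨ρ, hρ⟩, Units.ext ?_⟩
      rw [hφcoe]
      exact auxPhiFun_uniq τ ρ (hmem hρ) _ hα
  haveI : Fact (1 < orderOf τ) := ⟨h2n⟩
  have hker : φ.ker = (Subgroup.centralizer {τ}).subgroupOf N := by
    ext ρ
    rw [MonoidHom.mem_ker, Subgroup.mem_subgroupOf, Subgroup.mem_centralizer_singleton_iff]
    rw [Units.ext_iff, hφcoe, Units.val_one]
    constructor
    · intro h
      have hs := auxPhiFun_spec τ ↑ρ (hmem ρ.2)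
      rw [h, ZMod.val_one, pow_one] at hs
      exact mul_inv_eq_iff_eq_mul.mp hs
    · intro h
      apply auxPhiFun_uniq τ ↑ρ (hmem ρ.2)
      rw [ZMod.val_one, pow_one]
      exact mul_inv_eq_iff_eq_mul.mpr h
  set m := (Subgroup.centralizer {τ}).relIndex N with hm
  have hmcard : Nat.card φ.range = m := by
    rw [← Subgroup.index_ker φ, hker, hm, Subgroup.relIndex]
  have hℓdvd : ℓ ∣ orderOf τ := by rw [hv]; exact dvd_pow_self ℓ (by omega)
  haveI : NeZero ℓ := ⟨hℓ.ne_zero⟩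
  set U1 := (ZMod.unitsMap hℓdvd).ker with hU1
  have hU1card : Nat.card ↥U1 = ℓ ^ (v - 1) := by
    have h3 := aux_card_ker hℓdvd
    have ht2 : (orderOf τ).totient = ℓ ^ (v - 1) * (ℓ - 1) := by
      rw [hv, Nat.totient_prime_pow hℓ (by omega)]
    rw [Nat.totient_prime hℓ, ht2] at h3
    exact Nat.eq_of_mul_eq_mul_right (by have := hℓ.one_lt; omega) h3
  have hrange_le : φ.range ≤ U1 := by
    rintro x ⟨ρ, rfl⟩
    obtain ⟨kk, hkk⟩ := hG ↑ρ
    have hρpow : ρ ^ (ℓ ^ kk) = 1 := Subtype.ext (by simpa using hkk)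
    have hx1 : (φ ρ) ^ (ℓ ^ kk) = 1 := by rw [← map_pow, hρpow, map_one]
    rw [hU1, MonoidHom.mem_ker]
    set y := ZMod.unitsMap hℓdvd (φ ρ) with hy
    have hy1 : y ^ (ℓ ^ kk) = 1 := by rw [hy, ← map_pow, hx1, map_one]
    have hy2 : y ^ (ℓ - 1) = 1 := by
      have hc : Fintype.card (ZMod ℓ)ˣ = ℓ - 1 := by
        rw [ZMod.card_units_eq_totient, Nat.totient_prime hℓ]
      rw [← hc]; exact pow_card_eq_one
    have hcop : Nat.Coprime (ℓ ^ kk) (ℓ - 1) := by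
      apply Nat.Coprime.pow_left
      rw [hℓ.coprime_iff_not_dvd]
      intro hd
      have h5 := Nat.le_of_dvd (by have := hℓ.two_le; omega) hd
      have h6 := hℓ.two_le
      omega
    have : orderOf y = 1 := Nat.eq_one_of_dvd_one
      (hcop ▸ Nat.dvd_gcd (orderOf_dvd_of_pow_eq_one hy1) (orderOf_dvd_of_pow_eq_one hy2))
    exact orderOf_eq_one_iff.mp this
  have hmdvd : m ∣ ℓ ^ (v - 1) := by
    rw [← hmcard, ← hU1card]
    exact Subgroup.card_dvd_of_le hrange_le
  obtain ⟨s, hs, hms⟩ := (Nat.dvd_prime_pow hℓ).mp hmdvd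
  have hsv : s ≤ v - 1 := hs
  have hsv' : s ≤ v := by omega
  have hmn : m ∣ orderOf τ := by rw [hv, hms]; exact pow_dvd_pow ℓ hsv'
  have he : orderOf τ / m = ℓ ^ (v - s) := by
    rw [hv, hms, Nat.pow_div (by omega) hℓ.pos]
  refine ⟨by rw [he]; exact dvd_pow_self ℓ (by omega), ?_⟩
  have hen : (orderOf τ / m) ∣ orderOf τ := Nat.div_dvd_of_dvd hmn
  haveI : NeZero (orderOf τ / m) := ⟨by rw [he]; exact pow_ne_zero _ hℓ.ne_zero⟩
  set T := (ZMod.unitsMap hen).ker with hT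
  have hTcard : Nat.card ↥T = m := by
    have h3 := aux_card_ker hen
    have ht1 : (orderOf τ / m).totient = ℓ ^ (v - s - 1) * (ℓ - 1) := by
      rw [he, Nat.totient_prime_pow hℓ (show 0 < v - s by omega)]
    have ht2 : (orderOf τ).totient = ℓ ^ (v - 1) * (ℓ - 1) := by
      rw [hv, Nat.totient_prime_pow hℓ (by omega)]
    rw [ht1, ht2] at h3
    rw [hms]
    have hpos : 0 < ℓ ^ (v - s - 1) * (ℓ - 1) := by
      have := hℓ.one_lt
      have : 0 < ℓ - 1 := by omega
      positivity
    apply Nat.eq_of_mul_eq_mul_right hpos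
    have hstep : ℓ ^ s * (ℓ ^ (v - s - 1) * (ℓ - 1)) = ℓ ^ (v - 1) * (ℓ - 1) := by
      rw [← mul_assoc, ← pow_add]
      congr 2
      omega
    rw [hstep]
    exact h3
  have hℓe : ℓ ∣ orderOf τ / m := by rw [he]; exact dvd_pow_self ℓ (by omega)
  have hT_le : T ≤ U1 := by
    intro x hx
    rw [hT, MonoidHom.mem_ker] at hx
    rw [hU1, MonoidHom.mem_ker]
    calc ZMod.unitsMap hℓdvd x = ZMod.unitsMap (dvd_trans hℓe hen) x := rfl
      _ = ZMod.unitsMap hℓe (ZMod.unitsMap hen x) :=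
          (DFunLike.congr_fun (ZMod.unitsMap_comp hℓe hen) x).symm
      _ = 1 := by rw [hx, map_one]
  set u : (ZMod (orderOf τ))ˣ := ZMod.unitOfCoprime (1 + ℓ) (aux_coprime' hℓ hv) with hu
  have hu_ord : orderOf u = ℓ ^ (v - 1) := aux_orderOf' hℓ hodd hv1 hv
  have hu_mem : u ∈ U1 := by rw [hU1, MonoidHom.mem_ker]; exact aux_mem' hℓ hv hℓdvd
  haveI : IsCyclic ↥U1 := by
    apply isCyclic_of_orderOf_eq_card (⟨u, hu_mem⟩ : ↥U1)
    rw [hU1card]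
    exact (orderOf_injective U1.subtype U1.subtype_injective ⟨u, hu_mem⟩).symm.trans hu_ord
  have hA : φ.range.subgroupOf U1 = T.subgroupOf U1 := by
    apply aux_cyclic_unique
    rw [Nat.card_congr (Subgroup.subgroupOfEquivOfLe hrange_le).toEquiv,
      Nat.card_congr (Subgroup.subgroupOfEquivOfLe hT_le).toEquiv, hmcard, hTcard]
  have hrT : φ.range = T := by
    have h4 := Subgroup.subgroupOf_inj.mp hA
    rwa [inf_eq_left.mpr hrange_le, inf_eq_left.mpr hT_le] at h4
  rw [← hrange, hrT]
  ext α
  simp only [SetLike.mem_coe, Set.mem_setOf_eq, hT]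
  exact aux_ker_mem hen α
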